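/- For every integer k ≥ 4 and every real number c with 1 < c < k, there exists a real number a > 0 such that c is the unique global minimizer on (0, ∞) of the function g_{a,k}(x) = (a/x + 1/x^k)·e^x; that is, g_{a,k}(c) ≤ g_{a,k}(x) for all x > 0, with equality only at x = c. -/

import Mathlib

/-- `g a k x = (a/x + 1/x^k) * e^x`, the leading constant of the expected runtime. -/
noncomputable def hpjG (a : ℝ) (k : ℕ) (x : ℝ) : ℝ := (a / x + 1 / x ^ k) * Real.exp x

theorem stmt0 (k : ℕ) (hk : 4 ≤ k) (c : ℝ) (hc1 : 1 < c) (hck : c < k) :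
    ∃ a : ℝ, 0 < a ∧
      (∀ x : ℝ, 0 < x → hpjG a k c ≤ hpjG a k x) ∧
      (∀ x : ℝ, 0 < x → hpjG a k x = hpjG a k c → x = c) := by
  obtain ⟨m, rfl⟩ : ∃ m, k = m + 4 := ⟨k - 4, by omega⟩
  set k : ℕ := m + 4 with hkdef
  have hc0 : (0:ℝ) < c := lt_trans one_pos hc1
  set C : ℝ := c ^ (m + 3) * (c - 1) with hC
  have hCpos : 0 < C := mul_pos (pow_pos hc0 _) (sub_pos.2 hc1)
  set a : ℝ := ((k:ℝ) - c) / C with ha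
  have hapos : 0 < a := div_pos (sub_pos.2 hck) hCpos
  have haC : a * C = (k:ℝ) - c := div_mul_cancel₀ _ hCpos.ne'
  -- numerator of the derivative
  set P : ℝ → ℝ := fun x => a * x ^ (m + 3) * (x - 1) + (x - (k:ℝ)) with hP
  -- strict monotonicity of x ↦ x^(m+3)(x-1) on (1,∞)
  have hXmono : ∀ u v : ℝ, 1 < u → u < v → u ^ (m+3) * (u - 1) < v ^ (m+3) * (v - 1) := by
    intro u v hu huv
    have hu0 : 0 < u := lt_trans one_pos hu
    have h1 : u ^ (m+3) < v ^ (m+3) := pow_lt_pow_left₀ huv hu0.le (by omega)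
    have h2 : 0 < u - 1 := sub_pos.2 hu
    nlinarith [pow_pos hu0 (m+3), pow_pos (lt_trans hu0 huv) (m+3)]
  -- sign of P
  have hPneg : ∀ x : ℝ, 0 < x → x < c → P x < 0 := by
    intro x hx0 hxc
    have key : P x * C < 0 := by
      have hexp : P x * C = ((k:ℝ) - c) * (x ^ (m+3) * (x - 1)) + (x - (k:ℝ)) * C := by
        simp only [hP]; linear_combination (x ^ (m+3) * (x - 1)) * haC
      rw [hexp]
      rcases le_or_gt x 1 with hx1 | hx1
      · have h1 : x ^ (m+3) * (x - 1) ≤ 0 :=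
          mul_nonpos_of_nonneg_of_nonpos (pow_pos hx0 _).le (by linarith)
        have h2 : (x - (k:ℝ)) * C < 0 :=
          mul_neg_of_neg_of_pos (by linarith) hCpos
        nlinarith [sub_pos.2 hck]
      · have h1 : x ^ (m+3) * (x - 1) < C := hXmono x c hx1 hxc
        have h2 : ((k:ℝ) - c) * (x ^ (m+3) * (x - 1)) < ((k:ℝ) - c) * C :=
          mul_lt_mul_of_pos_left h1 (sub_pos.2 hck)
        have h3 : (x - (k:ℝ)) * C < (c - (k:ℝ)) * C :=
          mul_lt_mul_of_pos_right (by linarith) hCpos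
        nlinarith
    nlinarith
  have hPpos : ∀ x : ℝ, c < x → 0 < P x := by
    intro x hcx
    have key : 0 < P x * C := by
      have hexp : P x * C = ((k:ℝ) - c) * (x ^ (m+3) * (x - 1)) + (x - (k:ℝ)) * C := by
        simp only [hP]; linear_combination (x ^ (m+3) * (x - 1)) * haC
      rw [hexp]
      have h1 : C < x ^ (m+3) * (x - 1) := hXmono c x hc1 hcx
      have h2 : ((k:ℝ) - c) * C < ((k:ℝ) - c) * (x ^ (m+3) * (x - 1)) :=
        mul_lt_mul_of_pos_left h1 (sub_pos.2 hck)
      have h3 : (x - c) * C > 0 := mul_pos (by linarith) hCpos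
      nlinarith
    nlinarith
  -- derivative of hpjG
  have hderiv : ∀ x : ℝ, 0 < x →
      HasDerivAt (hpjG a k) (Real.exp x * P x / x ^ (k+1)) x := by
    intro x hx0
    have hxne : x ≠ 0 := hx0.ne'
    have hxk : x ^ k ≠ 0 := pow_ne_zero _ hxne
    have h1 : HasDerivAt (fun y : ℝ => a / y) (-(a / x ^ 2)) x := by
      simpa [div_eq_mul_inv, sq, mul_comm, mul_left_comm] using
        (hasDerivAt_inv hxne).const_mul a
    have h2 : HasDerivAt (fun y : ℝ => 1 / y ^ k)
        (-((k:ℝ) * x ^ (k-1)) / (x ^ k) ^ 2) x := by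
      simpa [one_div] using (hasDerivAt_pow k x).fun_inv hxk
    have h3 := ((h1.add h2).mul (Real.hasDerivAt_exp x))
    convert h3 using 1
    · rfl
    · rfl
    · rfl
    have hkk : k - 1 = m + 3 := by omega
    rw [hkk]
    simp only [hP, Pi.add_apply, hkdef]
    push_cast
    field_simp
    ring
  -- monotonicity on (0,c] and [c,∞)
  have hcont : ∀ x : ℝ, 0 < x → ContinuousAt (hpjG a k) x :=
    fun x hx => (hderiv x hx).continuousAt
  have hanti : StrictAntiOn (hpjG a k) (Set.Ioc 0 c) := by
    apply strictAntiOn_of_deriv_neg (convex_Ioc 0 c)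
    · exact fun x hx => (hcont x hx.1).continuousWithinAt
    · intro x hx
      rw [interior_Ioc] at hx
      rw [(hderiv x hx.1).deriv]
      exact div_neg_of_neg_of_pos
        (mul_neg_of_pos_of_neg (Real.exp_pos x) (hPneg x hx.1 hx.2))
        (pow_pos hx.1 _)
  have hmono : StrictMonoOn (hpjG a k) (Set.Ici c) := by
    apply strictMonoOn_of_deriv_pos (convex_Ici c)
    · exact fun x hx => (hcont x (lt_of_lt_of_le hc0 hx)).continuousWithinAt
    · intro x hx
      rw [interior_Ici] at hx
      have hx0 : 0 < x := lt_trans hc0 hx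
      rw [(hderiv x hx0).deriv]
      exact div_pos (mul_pos (Real.exp_pos x) (hPpos x hx)) (pow_pos hx0 _)
  have hlt : ∀ x : ℝ, 0 < x → x ≠ c → hpjG a k c < hpjG a k x := by
    intro x hx0 hxc
    rcases lt_or_gt_of_ne hxc with h | h
    · exact hanti ⟨hx0, h.le⟩ ⟨hc0, le_refl c⟩ h
    · exact hmono (le_refl c) h.le h
  refine ⟨a, hapos, ?_, ?_⟩
  · intro x hx0
    rcases eq_or_ne x c with rfl | h
    · exact le_refl _
    · exact (hlt x hx0 h).le
  · intro x hx0 hx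
    by_contra h
    exact absurd hx (ne_of_gt (hx ▸ hlt x hx0 h))
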